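/- arXiv:1701.07151 — 3 statements merged into one kernel-verified Lean document; each statement's English description precedes it below -/
import Mathlib

section
/- The Möbius transformation f_m maps the half-circle C_{4(4m)} = {z ∈ ℍ : |z - 16m| = 1} onto the half-circle C_{4(4m+2)} = {z ∈ ℍ : |z - (16m+8)| = 1}; explicitly, if z ∈ ℍ and |z - 16m| = 1, then |f_m(z) - (16m+8)| = 1. -/
/-- `f_m` maps the half-circle `C_{4(4m)}` onto the half-circle `C_{4(4m+2)}`. -/
theorem fm_maps_circle (m : ℤ) (z : ℂ) (hz : 0 < z.im)
    (hc : ‖z - 16 * m‖ = 1) :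
    ‖(((16 * m + 8) * z - (1 + 16 * m * (16 * m + 8))) / (z - 16 * m))
        - (16 * m + 8)‖ = 1 := by
  have hne : z - 16 * (m : ℂ) ≠ 0 := by
    intro h
    have : z = 16 * (m : ℂ) := by linear_combination h
    rw [this] at hz
    simp at hz
  have key : (((16 * m + 8) * z - (1 + 16 * m * (16 * m + 8))) / (z - 16 * m))
      - (16 * m + 8) = -1 / (z - 16 * m) := by
    field_simp
    ring
  rw [key, norm_div, hc]
  simp
end

section
/- The Möbius transformation f_m maps the inside of C_{4(4m)} onto the outside of C_{4(4m+2)}: if z ∈ ℍ with 0 < |z - 16m| < 1, then |f_m(z) - (16m+8)| > 1. -/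
/-- `f_m` maps the inside of `C_{4(4m)}` into the outside of `C_{4(4m+2)}`. -/
theorem fm_inside_to_outside (m : ℤ) (z : ℂ) (hz : 0 < z.im)
    (h0 : 0 < ‖z - 16 * m‖) (h1 : ‖z - 16 * m‖ < 1) :
    1 < ‖(((16 * m + 8) * z - (1 + 16 * m * (16 * m + 8))) / (z - 16 * m))
        - (16 * m + 8)‖ := by
  have hne : z - 16 * m ≠ 0 := by
    intro h; rw [h] at h0; simp at h0
  have key : (((16 * m + 8) * z - (1 + 16 * m * (16 * m + 8))) / (z - 16 * m))
      - (16 * m + 8) = -1 / (z - 16 * m) := by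
    field_simp; ring
  rw [key, norm_div, norm_neg, norm_one]
  rw [lt_div_iff₀ h0, one_mul]
  exact h1
end

section
/- If z ∈ ℍ lies in the interior of the fundamental polygon P (i.e., |z - 4n| > 1 for all n ∈ ℤ), then f_m(z) ∉ interior(P) for every m ∈ ℤ; in particular f_m(z) ≠ z, so no f_m fixes any interior point of P. -/
/-- If `z` lies in the interior of the fundamental polygon `P`, then `f_m z` does not,
and in particular `f_m` fixes no interior point of `P`. -/
theorem fm_moves_interior_points (m : ℤ) (z : ℂ) (hz : 0 < z.im)
    (hint : ∀ n : ℤ, 1 < ‖z - 4 * n‖) :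
    (((16 * m + 8) * z - (1 + 16 * m * (16 * m + 8))) / (z - 16 * m) ∉
      {w : ℂ | 0 < w.im ∧ ∀ n : ℤ, 1 < ‖w - 4 * n‖}) ∧
    ((16 * m + 8) * z - (1 + 16 * m * (16 * m + 8))) / (z - 16 * m) ≠ z := by
  set w : ℂ := ((16 * m + 8) * z - (1 + 16 * m * (16 * m + 8))) / (z - 16 * m) with hw
  have h1 : 1 < ‖z - 16 * m‖ := by
    have := hint (4 * m)
    push_cast at this
    convert this using 3
    ring
  have hne : z - 16 * m ≠ 0 := by
    intro h
    rw [h] at h1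
    simp at h1
    linarith
  have hkey : w - (16 * m + 8) = -1 / (z - 16 * m) := by
    rw [hw]
    field_simp
    ring
  have habs : ‖w - (16 * m + 8)‖ < 1 := by
    rw [hkey]
    rw [norm_div]
    simp only [norm_neg, norm_one]
    rw [div_lt_one (by linarith)]
    linarith
  have hnotin : w ∉ {w : ℂ | 0 < w.im ∧ ∀ n : ℤ, 1 < ‖w - 4 * n‖} := by
    rintro ⟨-, h⟩
    have := h (4 * m + 2)
    have e : (4 : ℂ) * ((4 * m + 2 : ℤ) : ℂ) = 16 * m + 8 := by push_cast; ring
    rw [e] at this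
    linarith
  refine ⟨hnotin, fun heq => hnotin ?_⟩
  rw [heq]
  exact ⟨hz, hint⟩
end
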